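/- Suppose a family of probability measures (μ_t)_{t∈[0,1]} on ℤ satisfies μ_0 = δ_0, μ_1 = δ_n, and the translation equation d/dt ∑_k f(k)μ_t(k) = n ∑_k (∇f)(k)μ_t(k) for all finitely supported f, where ∇ has coefficients (α_k) ∈ [0,1]. Then α_n = 1. -/

import Mathlib

open Finset

/-- The derivative on `ℤ` with mixing coefficients `α`. -/
noncomputable def nabla (α : ℤ → ℝ) (f : ℤ → ℝ) (k : ℤ) : ℝ :=
  α k * (f k - f (k - 1)) + (1 - α k) * (f (k + 1) - f k)

theorem stmt4 (n : ℕ) (hn : 1 ≤ n) (α : ℤ → ℝ) (hα : ∀ k, α k ∈ Set.Icc (0 : ℝ) 1)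
    (μ : ℝ → ℤ → ℝ)
    (hprob : ∀ t ∈ Set.Icc (0 : ℝ) 1, (∀ k, 0 ≤ μ t k) ∧ HasSum (μ t) 1)
    (h0 : ∀ k, μ 0 k = if k = 0 then 1 else 0)
    (h1 : ∀ k, μ 1 k = if k = (n : ℤ) then 1 else 0)
    (heq : ∀ f : ℤ → ℝ, (Function.support f).Finite → ∀ t ∈ Set.Icc (0 : ℝ) 1,
      HasDerivWithinAt (fun s => ∑' k : ℤ, f k * μ s k)
        ((n : ℝ) * ∑' k : ℤ, nabla α f k * μ t k) (Set.Icc 0 1) t) :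
    α (n : ℤ) = 1 := by
  set N : ℤ := (n : ℤ) with hN
  set f : ℤ → ℝ := fun k => if k = N + 1 then 1 else 0 with hf
  have hsupp : (Function.support f).Finite := by
    apply Set.Finite.subset (Set.finite_singleton (N + 1))
    intro x hx
    simp only [Function.mem_support, hf] at hx
    by_contra h
    simp only [Set.mem_singleton_iff] at h
    simp [h] at hx
  -- the tsum is just μ s (N+1)
  have hg : ∀ s, (∑' k : ℤ, f k * μ s k) = μ s (N + 1) := by
    intro s
    rw [tsum_eq_single (N + 1)]
    · simp [hf]
    · intro b hb; simp [hf, hb]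
  -- compute the derivative value at t = 1
  have htsum : (∑' k : ℤ, nabla α f k * μ 1 k) = 1 - α N := by
    rw [tsum_eq_single N]
    · rw [h1 N]
      simp only [hN, if_pos rfl, mul_one]
      have h1 : f N = 0 := by simp [hf]
      have h2 : f (N - 1) = 0 := by simp [hf]; omega
      have h3 : f (N + 1) = 1 := by simp [hf]
      simp only [nabla, ↓reduceIte]; rw [← hN, h1, h2, h3]; ring
    · intro b hb
      rw [h1 b, if_neg (by exact_mod_cast hb)]
      ring
  have h1mem : (1 : ℝ) ∈ Set.Icc (0 : ℝ) 1 := by constructor <;> norm_num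
  have hd := heq f hsupp 1 h1mem
  rw [htsum] at hd
  -- g(t) = μ t (N+1) ≥ 0 on [0,1], g(1) = 0
  have hg1 : (∑' k : ℤ, f k * μ 1 k) = 0 := by
    rw [hg, h1]
    rw [if_neg (by omega)]
  have hgpos : ∀ t ∈ Set.Icc (0 : ℝ) 1, 0 ≤ ∑' k : ℤ, f k * μ t k := by
    intro t ht
    rw [hg]
    exact (hprob t ht).1 _
  -- derivative is ≤ 0 at the right endpoint minimum
  rw [hasDerivWithinAt_iff_tendsto_slope] at hd
  have hset : Set.Icc (0 : ℝ) 1 \ {1} = Set.Ico (0 : ℝ) 1 := by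
    ext x
    simp only [Set.mem_diff, Set.mem_Icc, Set.mem_singleton_iff, Set.mem_Ico]
    constructor
    · rintro ⟨⟨h1, h2⟩, h3⟩; exact ⟨h1, lt_of_le_of_ne h2 h3⟩
    · rintro ⟨h1, h2⟩; exact ⟨⟨h1, h2.le⟩, h2.ne⟩
  rw [hset] at hd
  have hne : (nhdsWithin (1 : ℝ) (Set.Ico (0 : ℝ) 1)).NeBot := by
    rw [nhdsWithin_Ico_eq_nhdsLT (by norm_num : (0:ℝ) < 1)]
    infer_instance
  have hle : (n : ℝ) * (1 - α N) ≤ 0 := by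
    refine le_of_tendsto hd ?_
    filter_upwards [self_mem_nhdsWithin] with t ht
    have ht' : t ∈ Set.Icc (0 : ℝ) 1 := ⟨ht.1, ht.2.le⟩
    have : slope (fun s => ∑' k : ℤ, f k * μ s k) 1 t =
        ((∑' k : ℤ, f k * μ t k) - (∑' k : ℤ, f k * μ 1 k)) / (t - 1) := by
      simp [slope, div_eq_inv_mul]
      try ring
    rw [this, hg1, sub_zero]
    apply div_nonpos_of_nonneg_of_nonpos (hgpos t ht')
    linarith [ht.2]
  have hαn := hα N
  have hnpos : (0 : ℝ) < n := by exact_mod_cast hn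
  have : 1 - α N ≤ 0 := by
    by_contra h
    push_neg at h
    nlinarith
  linarith [hαn.2]
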